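/- arXiv:2004.13014 — 3 statements merged into one kernel-verified Lean document; each statement's English description precedes it below -/
import Mathlib

section
/- If P is a symmetric positive definite solution of the algebraic Riccati equation AᵀP + PA - PBBᵀP + εI = 0 with ε > 0, then for any complex scalar ρ with Re(ρ) ≥ 1/2, the matrix A - ρ BBᵀP is Hurwitz stable. -/
open Matrix ComplexOrder
open scoped MatrixOrder

private lemma mapCT {k l : ℕ} (M : Matrix (Fin k) (Fin l) ℝ) :
    (M.map (fun x : ℝ => (x : ℂ)))ᴴ = Mᵀ.map (fun x : ℝ => (x : ℂ)) := by
  ext i j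
  simp [Matrix.conjTranspose_apply, Matrix.map_apply, Complex.conj_ofReal]

private lemma mapMulC {k l o : ℕ} (M : Matrix (Fin k) (Fin l) ℝ) (N : Matrix (Fin l) (Fin o) ℝ) :
    (M * N).map (fun x : ℝ => (x : ℂ)) =
      M.map (fun x : ℝ => (x : ℂ)) * N.map (fun x : ℝ => (x : ℂ)) :=
  Matrix.map_mul (f := Complex.ofRealHom)

/-- If `P` is a symmetric positive definite solution of the Riccati equation
`AᵀP + PA - PBBᵀP + εI = 0` with `ε > 0`, then for any complex `ρ` with
`Re ρ ≥ 1/2`, the matrix `A - ρ B Bᵀ P` is Hurwitz stable. -/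
theorem riccati_hurwitz (n m : ℕ) (A : Matrix (Fin n) (Fin n) ℝ)
    (B : Matrix (Fin n) (Fin m) ℝ) (ε : ℝ) (hε : 0 < ε)
    (P : Matrix (Fin n) (Fin n) ℝ) (hP : P.PosDef) (hPsymm : P.IsSymm)
    (hric : Aᵀ * P + P * A - P * B * Bᵀ * P + ε • (1 : Matrix (Fin n) (Fin n) ℝ) = 0)
    (ρ : ℂ) (hρ : (1 : ℝ) / 2 ≤ ρ.re) :
    ∀ μ : ℂ, (∃ v : Fin n → ℂ, v ≠ 0 ∧
      ((A.map (fun x : ℝ => (x : ℂ))) -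
        ρ • ((B * Bᵀ * P).map (fun x : ℝ => (x : ℂ)))).mulVec v = μ • v) →
      μ.re < 0 := by
  rintro μ ⟨v, hv, heig⟩
  set f : ℝ → ℂ := fun x => (x : ℂ) with hf
  set Ac := A.map f with hAc
  set Qc := (B * Bᵀ * P).map f with hQc
  set Pc := P.map f with hPc
  -- eigen equation rearranged
  have hAv : Ac *ᵥ v = μ • v + ρ • (Qc *ᵥ v) := by
    have h := heig
    rw [sub_mulVec, smul_mulVec, sub_eq_iff_eq_add] at h
    rw [h]
  -- scalars
  set q : ℂ := star v ⬝ᵥ (Pc *ᵥ v) with hq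
  set s : ℂ := star v ⬝ᵥ v with hs
  set r : ℂ := star v ⬝ᵥ ((P * B * Bᵀ * P).map f *ᵥ v) with hr
  -- riccati over ℝ rearranged
  have h3 : Aᵀ * P + P * A = P * B * Bᵀ * P - ε • (1 : Matrix (Fin n) (Fin n) ℝ) := by
    have h := hric
    rw [add_eq_zero_iff_eq_neg, sub_eq_iff_eq_add] at h
    rw [h]; abel
  -- E1
  have h1 : star v ⬝ᵥ ((P * A).map f *ᵥ v) = μ * q + ρ * r := by
    rw [mapMulC, ← mulVec_mulVec, hAv]
    rw [mulVec_add, mulVec_smul, mulVec_smul, dotProduct_add, dotProduct_smul,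
      dotProduct_smul, mulVec_mulVec, ← mapMulC]
    have : P * (B * Bᵀ * P) = P * B * Bᵀ * P := by
      simp [Matrix.mul_assoc]
    rw [this]
    simp [smul_eq_mul, hq, hr, hPc, hf]
  -- E2
  have h2 : star v ⬝ᵥ ((Aᵀ * P).map f *ᵥ v) =
      (starRingEnd ℂ) μ * q + (starRingEnd ℂ) ρ * r := by
    rw [mapMulC, ← mulVec_mulVec, dotProduct_mulVec]
    have hAT : (Aᵀ.map f) = Acᴴ := (mapCT A).symm
    rw [hAT, ← star_mulVec, hAv]
    have hstar : star (μ • v + ρ • (Qc *ᵥ v)) =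
        (starRingEnd ℂ) μ • star v + (starRingEnd ℂ) ρ • star (Qc *ᵥ v) := by
      simp [star_smul]
    rw [hstar, add_dotProduct, smul_dotProduct, smul_dotProduct, star_mulVec,
      ← dotProduct_mulVec, mulVec_mulVec]
    have hQP : Qcᴴ * Pc = (P * B * Bᵀ * P).map f := by
      rw [hQc, mapCT, hPc, ← mapMulC]
      simp [transpose_mul, transpose_transpose, hPsymm.eq, Matrix.mul_assoc, hf]
    rw [hQP]
    simp [smul_eq_mul, hq, hr, hPc, hf]
  -- key identity
  have key : ((starRingEnd ℂ) μ + μ) * q + ((starRingEnd ℂ) ρ + ρ) * r = r - (ε : ℂ) * s := by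
    have hsum : star v ⬝ᵥ ((Aᵀ * P + P * A).map f *ᵥ v) =
        ((starRingEnd ℂ) μ + μ) * q + ((starRingEnd ℂ) ρ + ρ) * r := by
      rw [Matrix.map_add f (by intro a b; simp [f]), add_mulVec, dotProduct_add, h1, h2]; ring
    rw [h3] at hsum
    have hmap : ((P * B * Bᵀ * P - ε • (1 : Matrix (Fin n) (Fin n) ℝ)).map f) *ᵥ v
        = (P * B * Bᵀ * P).map f *ᵥ v - (ε : ℂ) • v := by
      have hmm : (P * B * Bᵀ * P - ε • (1 : Matrix (Fin n) (Fin n) ℝ)).map f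
          = (P * B * Bᵀ * P).map f - (ε : ℂ) • (1 : Matrix (Fin n) (Fin n) ℂ) := by
        ext i j
        by_cases h : i = j <;>
          simp [h, Matrix.map_apply, Matrix.sub_apply, Matrix.smul_apply, Matrix.one_apply, f]
      rw [hmm, sub_mulVec, smul_mulVec, one_mulVec]
    rw [hmap, dotProduct_sub, dotProduct_smul, smul_eq_mul] at hsum
    linear_combination -hsum
  -- square root of P
  set S := CFC.sqrt P with hSdef
  have hSS : S * S = P := CFC.sqrt_mul_sqrt_self P hP.posSemidef.nonneg
  have hSH : S.IsHermitian := (CFC.sqrt_nonneg P).posSemidef.1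
  have hSt : Sᵀ = S := by
    ext i j
    simpa using congr_fun (congr_fun hSH i) j
  set Sc := S.map f with hScdef
  have hScH : Scᴴ = Sc := by rw [hScdef, mapCT, hSt]
  -- q is positive
  have hu : q = star (Sc *ᵥ v) ⬝ᵥ (Sc *ᵥ v) := by
    rw [hq, hPc, ← hSS, mapMulC, ← mulVec_mulVec, ← hScdef, ← hScH, dotProduct_mulVec,
      ← star_mulVec, hScH]
  have huv : Sc *ᵥ v ≠ 0 := by
    intro h0
    have hPv : Pc *ᵥ v = 0 := by
      rw [hPc, ← hSS, mapMulC, ← mulVec_mulVec, ← hScdef, h0, mulVec_zero]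
    have hdet : Pc.det = (P.det : ℂ) := (RingHom.map_det Complex.ofRealHom P).symm
    have hunit : IsUnit Pc := (Matrix.isUnit_iff_isUnit_det _).2 <| by
      rw [hdet]
      exact isUnit_iff_ne_zero.2 (by exact_mod_cast hP.det_pos.ne')
    have hinj := Matrix.mulVec_injective_iff_isUnit.2 hunit
    exact hv (hinj (show Pc *ᵥ v = Pc *ᵥ 0 by simp [hPv]))
  have hqpos : 0 < q := hu ▸ (dotProduct_star_self_pos_iff.2 huv)
  -- r is nonnegative
  have hrnn : 0 ≤ r := by
    have hid : (P * B * Bᵀ * P).map f = ((Bᵀ * P).map f)ᴴ * ((Bᵀ * P).map f) := by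
      rw [mapCT, ← mapMulC]
      simp [transpose_mul, transpose_transpose, hPsymm.eq, Matrix.mul_assoc, hf]
    rw [hr, hid, ← mulVec_mulVec, dotProduct_mulVec, ← star_mulVec]
    exact dotProduct_star_self_nonneg _
  have hspos : 0 < s := dotProduct_star_self_pos_iff.2 hv
  -- real parts
  have hqre : 0 < q.re := by simpa using (Complex.lt_def.1 hqpos).1
  have hqim : q.im = 0 := by simpa using (Complex.lt_def.1 hqpos).2.symm
  have hrre : 0 ≤ r.re := by simpa using (Complex.le_def.1 hrnn).1
  have hrim : r.im = 0 := by simpa using (Complex.le_def.1 hrnn).2.symm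
  have hsre : 0 < s.re := by simpa using (Complex.lt_def.1 hspos).1
  have hsim : s.im = 0 := by simpa using (Complex.lt_def.1 hspos).2.symm
  have hkre := congrArg Complex.re key
  simp only [Complex.add_re, Complex.mul_re, Complex.sub_re, Complex.add_im, Complex.mul_im,
    Complex.conj_re, Complex.conj_im, Complex.ofReal_re, Complex.ofReal_im,
    hqim, hrim, hsim, mul_zero, zero_mul, sub_zero, add_zero, neg_zero] at hkre
  nlinarith [mul_nonneg (by linarith : (0:ℝ) ≤ 2 * ρ.re - 1) hrre, mul_pos hε hsre, hqre,
    mul_pos hqre hsre]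
end

section
/- Suppose P = Pᵀ > 0 solves the discrete algebraic Riccati equation AᵀPA - P - AᵀPB(I + BᵀPB)^{-1}BᵀPA + εI = 0 with ε > 0, and let K = (I + BᵀPB)^{-1}BᵀPA. Then A - BK is Schur stable. -/
open Matrix

lemma riccati_lyap (n m : ℕ) (A : Matrix (Fin n) (Fin n) ℝ)
    (B : Matrix (Fin n) (Fin m) ℝ) (ε : ℝ)
    (P : Matrix (Fin n) (Fin n) ℝ) (hP : P.PosDef) (hPsymm : P.IsSymm)
    (hric : Aᵀ * P * A - P -
        Aᵀ * P * B * ((1 : Matrix (Fin m) (Fin m) ℝ) + Bᵀ * P * B)⁻¹ * Bᵀ * P * A +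
        ε • (1 : Matrix (Fin n) (Fin n) ℝ) = 0)
    (K : Matrix (Fin m) (Fin n) ℝ)
    (hK : K = ((1 : Matrix (Fin m) (Fin m) ℝ) + Bᵀ * P * B)⁻¹ * (Bᵀ * P * A)) :
    (A - B * K)ᵀ * P * (A - B * K) = P - ε • 1 - Kᵀ * K := by
  subst hK
  set S : Matrix (Fin m) (Fin m) ℝ := (1 : Matrix (Fin m) (Fin m) ℝ) + Bᵀ * P * B with hSdef
  have hBPB : (Bᵀ * P * B).PosSemidef := by
    have h : (Bᵀ * P * B) = Bᴴ * P * B := by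
      rw [conjTranspose_eq_transpose_of_trivial]
    rw [h]
    exact hP.posSemidef.conjTranspose_mul_mul_same B
  have hSpd : S.PosDef := Matrix.PosDef.add_posSemidef Matrix.PosDef.one hBPB
  have hdet : IsUnit S.det := isUnit_iff_ne_zero.mpr (ne_of_gt hSpd.det_pos)
  have hSS : S * S⁻¹ = 1 := Matrix.mul_nonsing_inv S hdet
  have hSS' : S⁻¹ * S = 1 := Matrix.nonsing_inv_mul S hdet
  have hSsymm : Sᵀ = S := by
    have h : (Bᵀ * P * B)ᵀ = Bᵀ * P * B := by
      rw [Matrix.transpose_mul, Matrix.transpose_mul, Matrix.transpose_transpose,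
        hPsymm.eq, Matrix.mul_assoc]
    rw [hSdef, Matrix.transpose_add, Matrix.transpose_one, h]
  have hSinvT : S⁻¹ᵀ = S⁻¹ := by rw [Matrix.transpose_nonsing_inv, hSsymm]
  have hcancel : ∀ x : Matrix (Fin m) (Fin n) ℝ, S * (S⁻¹ * x) = x := by
    intro x; rw [← Matrix.mul_assoc, hSS, Matrix.one_mul]
  have hBx : ∀ x : Matrix (Fin m) (Fin n) ℝ, Bᵀ * (P * (B * x)) = S * x - x := by
    intro x
    rw [hSdef, Matrix.add_mul, Matrix.one_mul, Matrix.mul_assoc, Matrix.mul_assoc]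
    abel
  simp only [Matrix.mul_assoc] at hric ⊢
  have hAPA : Aᵀ * (P * A) = P - ε • 1 + Aᵀ * (P * (B * (S⁻¹ * (Bᵀ * (P * A))))) := by
    rw [← sub_eq_zero, ← hric]; abel
  simp only [Matrix.transpose_sub, Matrix.transpose_mul, Matrix.transpose_transpose,
    hSinvT, hPsymm.eq, Matrix.sub_mul, Matrix.mul_sub, Matrix.mul_assoc,
    hBx, hcancel, hAPA]
  abel

lemma quad_ofReal (k : ℕ) (M : Matrix (Fin k) (Fin k) ℝ) (hM : Mᵀ = M) (v : Fin k → ℂ) :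
    star v ⬝ᵥ (M.map (fun x : ℝ => (x : ℂ))) *ᵥ v =
      (((fun i => (v i).re) ⬝ᵥ M *ᵥ (fun i => (v i).re)
        + (fun i => (v i).im) ⬝ᵥ M *ᵥ (fun i => (v i).im) : ℝ) : ℂ) := by
  set Mc : Matrix (Fin k) (Fin k) ℂ := M.map (fun x : ℝ => (x : ℂ)) with hMc
  set a : Fin k → ℝ := fun i => (v i).re with ha
  set b : Fin k → ℝ := fun i => (v i).im with hb
  set a' : Fin k → ℂ := fun i => ((a i : ℝ) : ℂ) with ha'
  set b' : Fin k → ℂ := fun i => ((b i : ℝ) : ℂ) with hb'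
  have hMcT : Mcᵀ = Mc := by rw [hMc, ← Matrix.transpose_map, hM]
  have hv : v = a' + Complex.I • b' := by
    funext i
    simp only [Pi.add_apply, Pi.smul_apply, ha', hb', ha, hb, smul_eq_mul]
    rw [mul_comm, Complex.re_add_im]
  have hstar : star v = a' - Complex.I • b' := by
    funext i
    simp only [Pi.star_apply, Pi.sub_apply, Pi.smul_apply, ha', hb', ha, hb, smul_eq_mul,
      RCLike.star_def]
    apply Complex.ext <;> simp
  have hvm : a' ᵥ* Mc = Mc *ᵥ a' := by
    nth_rewrite 1 [← hMcT]
    rw [Matrix.vecMul_transpose]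
  have hsym : a' ⬝ᵥ Mc *ᵥ b' = b' ⬝ᵥ Mc *ᵥ a' := by
    rw [Matrix.dotProduct_mulVec, hvm, dotProduct_comm]
  have hconv : ∀ x y : Fin k → ℝ,
      (fun i => ((x i : ℝ) : ℂ)) ⬝ᵥ Mc *ᵥ (fun i => ((y i : ℝ) : ℂ))
        = ((x ⬝ᵥ M *ᵥ y : ℝ) : ℂ) := by
    intro x y
    have h2 : Mc *ᵥ (fun i => ((y i : ℝ) : ℂ)) = fun i => ((((M *ᵥ y) i : ℝ)) : ℂ) := by
      funext i
      exact (RingHom.map_mulVec Complex.ofRealHom M y i).symm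
    rw [h2]
    exact (RingHom.map_dotProduct Complex.ofRealHom x (M *ᵥ y)).symm
  conv_lhs => rw [hstar, hv]
  rw [Matrix.mulVec_add, Matrix.mulVec_smul, sub_dotProduct, dotProduct_add,
    dotProduct_add, smul_dotProduct, smul_dotProduct,
    dotProduct_smul, dotProduct_smul, hsym]
  rw [hconv a a, hconv b b]
  simp only [smul_eq_mul]
  push_cast
  ring_nf
  rw [Complex.I_sq]
  ring

/-- If `P = Pᵀ > 0` solves the discrete algebraic Riccati equation
`AᵀPA - P - AᵀPB(I + BᵀPB)⁻¹BᵀPA + εI = 0` with `ε > 0`, and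
`K = (I + BᵀPB)⁻¹BᵀPA`, then `A - BK` is Schur stable. -/
theorem discrete_riccati_schur (n m : ℕ) (A : Matrix (Fin n) (Fin n) ℝ)
    (B : Matrix (Fin n) (Fin m) ℝ) (ε : ℝ) (hε : 0 < ε)
    (P : Matrix (Fin n) (Fin n) ℝ) (hP : P.PosDef) (hPsymm : P.IsSymm)
    (hric : Aᵀ * P * A - P -
        Aᵀ * P * B * ((1 : Matrix (Fin m) (Fin m) ℝ) + Bᵀ * P * B)⁻¹ * Bᵀ * P * A +
        ε • (1 : Matrix (Fin n) (Fin n) ℝ) = 0)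
    (K : Matrix (Fin m) (Fin n) ℝ)
    (hK : K = ((1 : Matrix (Fin m) (Fin m) ℝ) + Bᵀ * P * B)⁻¹ * (Bᵀ * P * A)) :
    ∀ μ : ℂ, (∃ v : Fin n → ℂ, v ≠ 0 ∧
      ((A - B * K).map (fun x : ℝ => (x : ℂ))).mulVec v = μ • v) →
      ‖μ‖ < 1 := by
  intro μ hex
  obtain ⟨v, hv, hμ⟩ := hex
  have hL : (A - B * K)ᵀ * P * (A - B * K) = P - ε • 1 - Kᵀ * K :=
    riccati_lyap n m A B ε P hP hPsymm hric K hK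
  set f : ℝ → ℂ := fun x : ℝ => (x : ℂ) with hf
  have hfr : f = ⇑Complex.ofRealHom := rfl
  set F : Matrix (Fin n) (Fin n) ℝ := A - B * K with hFdef
  set Fc : Matrix (Fin n) (Fin n) ℂ := F.map f with hFc
  set Pc : Matrix (Fin n) (Fin n) ℂ := P.map f with hPc
  set Qc : Matrix (Fin n) (Fin n) ℂ := (Kᵀ * K).map f with hQc
  have hmul : ∀ (X Y : Matrix (Fin n) (Fin n) ℝ), (X * Y).map f = X.map f * Y.map f := by
    intro X Y; rw [hfr]; exact Matrix.map_mul
  have hLc : Fcᵀ * Pc * Fc = Pc - (ε : ℂ) • 1 - Qc := by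
    have h1 : (Fᵀ * P * F).map f = Fcᵀ * Pc * Fc := by
      rw [hmul, hmul, Matrix.transpose_map]
    have h2 : ((P - ε • 1 - Kᵀ * K) : Matrix (Fin n) (Fin n) ℝ).map f
        = Pc - (ε : ℂ) • 1 - Qc := by
      ext i j
      by_cases h : i = j <;>
        simp [hPc, hQc, hf, Matrix.map_apply, Matrix.sub_apply, Matrix.smul_apply,
          Matrix.one_apply, h]
    rw [← h1, hL, h2]
  -- quadratic form on the left
  set a : Fin n → ℝ := fun i => (v i).re with ha
  set b : Fin n → ℝ := fun i => (v i).im with hb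
  set pr : ℝ := a ⬝ᵥ P *ᵥ a + b ⬝ᵥ P *ᵥ b with hpr
  set tr : ℝ := a ⬝ᵥ (Kᵀ * K) *ᵥ a + b ⬝ᵥ (Kᵀ * K) *ᵥ b with htr
  set sr : ℝ := ∑ i, Complex.normSq (v i) with hsr
  have hp : star v ⬝ᵥ Pc *ᵥ v = (pr : ℂ) := quad_ofReal n P hPsymm.eq v
  have ht : star v ⬝ᵥ Qc *ᵥ v = (tr : ℂ) := by
    apply quad_ofReal n (Kᵀ * K) _ v
    rw [Matrix.transpose_mul, Matrix.transpose_transpose]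
  have hs : star v ⬝ᵥ v = (sr : ℂ) := by
    rw [hsr]
    push_cast
    simp [dotProduct, Complex.normSq_eq_conj_mul_self, RCLike.star_def]
  have hherm : Fcᴴ = Fcᵀ := by
    ext i j
    simp [hFc, conjTranspose_apply, Complex.conj_ofReal, hf]
  have hsv : star (Fc *ᵥ v) = star v ᵥ* Fcᵀ := by
    rw [star_mulVec, hherm]
  have key : star v ⬝ᵥ (Fcᵀ * Pc * Fc) *ᵥ v = (Complex.normSq μ : ℂ) * (pr : ℂ) := by
    calc star v ⬝ᵥ (Fcᵀ * Pc * Fc) *ᵥ v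
        = star v ⬝ᵥ Fcᵀ *ᵥ (Pc *ᵥ (Fc *ᵥ v)) := by
          rw [← Matrix.mulVec_mulVec, ← Matrix.mulVec_mulVec]
      _ = (star v ᵥ* Fcᵀ) ⬝ᵥ (Pc *ᵥ (Fc *ᵥ v)) := by rw [Matrix.dotProduct_mulVec]
      _ = star (Fc *ᵥ v) ⬝ᵥ (Pc *ᵥ (Fc *ᵥ v)) := by rw [hsv]
      _ = star (μ • v) ⬝ᵥ (Pc *ᵥ (μ • v)) := by rw [hμ]
      _ = (starRingEnd ℂ μ * μ) * (star v ⬝ᵥ Pc *ᵥ v) := by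
          rw [Matrix.mulVec_smul, star_smul, smul_dotProduct, dotProduct_smul,
            smul_eq_mul, smul_eq_mul, RCLike.star_def]
          ring
      _ = (Complex.normSq μ : ℂ) * (pr : ℂ) := by
          rw [← Complex.normSq_eq_conj_mul_self, hp]
  have hrhs : star v ⬝ᵥ (Pc - (ε : ℂ) • 1 - Qc) *ᵥ v
      = (pr : ℂ) - (ε : ℂ) * (sr : ℂ) - (tr : ℂ) := by
    rw [Matrix.sub_mulVec, Matrix.sub_mulVec, dotProduct_sub, dotProduct_sub,
      Matrix.smul_mulVec, Matrix.one_mulVec, dotProduct_smul, smul_eq_mul,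
      hp, ht, hs]
  have main_eq : (Complex.normSq μ : ℂ) * (pr : ℂ) = (pr : ℂ) - (ε : ℂ) * (sr : ℂ) - (tr : ℂ) := by
    rw [← key, hLc, hrhs]
  have hreal : Complex.normSq μ * pr = pr - ε * sr - tr := by exact_mod_cast main_eq
  -- positivity facts
  have hKK : (Kᵀ * K).PosSemidef := by
    have h := Matrix.posSemidef_conjTranspose_mul_self K
    rwa [conjTranspose_eq_transpose_of_trivial] at h
  have htr0 : 0 ≤ tr := by
    have h1 := hKK.dotProduct_mulVec_nonneg a
    have h2 := hKK.dotProduct_mulVec_nonneg b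
    simp only [star_trivial] at h1 h2
    rw [htr]; linarith
  have hsr0 : 0 < sr := by
    obtain ⟨i, hi⟩ := Function.ne_iff.mp hv
    refine Finset.sum_pos' (fun j _ => Complex.normSq_nonneg _) ⟨i, Finset.mem_univ i, ?_⟩
    exact Complex.normSq_pos.mpr hi
  have hab : a ≠ 0 ∨ b ≠ 0 := by
    by_contra h
    push_neg at h
    apply hv
    funext i
    have h1 : a i = 0 := by rw [h.1]; rfl
    have h2 : b i = 0 := by rw [h.2]; rfl
    apply Complex.ext <;> simpa using by first | exact h1 | exact h2
  have hpr0 : 0 < pr := by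
    have hna := hP.posSemidef.dotProduct_mulVec_nonneg a
    have hnb := hP.posSemidef.dotProduct_mulVec_nonneg b
    simp only [star_trivial] at hna hnb
    rcases hab with h | h
    · have := hP.dotProduct_mulVec_pos h
      simp only [star_trivial] at this
      rw [hpr]; linarith
    · have := hP.dotProduct_mulVec_pos h
      simp only [star_trivial] at this
      rw [hpr]; linarith
  have hns : Complex.normSq μ < 1 := by nlinarith
  nlinarith [Complex.sq_norm μ, norm_nonneg μ]
end

section
/- Let P_δ solve the discrete H₂ Riccati equation P = AᵀPA + δI - AᵀPB(BᵀPB + I)^{-1}BᵀPA and set F_δ = -(BᵀP_δB + I)^{-1}BᵀP_δA and γ_δ = λ_max(BᵀP_δB). Then for any λ ∈ ℂ satisfying |λ - (1 + 1/γ_δ)| < √(1+γ_δ)/γ_δ, the matrix A + λBF_δ is Schur stable. -/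
open Matrix
open scoped ComplexOrder

noncomputable def cmap {a b : ℕ} (M : Matrix (Fin a) (Fin b) ℝ) : Matrix (Fin a) (Fin b) ℂ :=
  M.map (fun x : ℝ => (x : ℂ))

lemma cmap_mul {a b c : ℕ} (M : Matrix (Fin a) (Fin b) ℝ) (N : Matrix (Fin b) (Fin c) ℝ) :
    cmap (M * N) = cmap M * cmap N := by
  ext i j
  simp [cmap, Matrix.mul_apply]

lemma cmap_add {a : ℕ} (M N : Matrix (Fin a) (Fin a) ℝ) : cmap (M + N) = cmap M + cmap N := by
  ext i j; simp [cmap]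

lemma cmap_sub {a : ℕ} (M N : Matrix (Fin a) (Fin a) ℝ) : cmap (M - N) = cmap M - cmap N := by
  ext i j; simp [cmap]

lemma cmap_neg {a b : ℕ} (M : Matrix (Fin a) (Fin b) ℝ) : cmap (-M) = -cmap M := by
  ext i j; simp [cmap]

lemma cmap_smul {a : ℕ} (c : ℝ) (M : Matrix (Fin a) (Fin a) ℝ) :
    cmap (c • M) = (c : ℂ) • cmap M := by
  ext i j; simp [cmap]

lemma cmap_one {a : ℕ} : cmap (1 : Matrix (Fin a) (Fin a) ℝ) = 1 := by
  ext i j; simp [cmap, Matrix.one_apply, apply_ite]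

lemma cmap_conjTranspose {a b : ℕ} (M : Matrix (Fin a) (Fin b) ℝ) :
    (cmap M)ᴴ = cmap Mᵀ := by
  ext i j; simp [cmap, conjTranspose_apply]

lemma real_conjTranspose_eq_transpose {a b : ℕ} (M : Matrix (Fin a) (Fin b) ℝ) : Mᴴ = Mᵀ := by
  ext i j; simp [conjTranspose_apply]

lemma cmap_posSemidef {k : ℕ} {S : Matrix (Fin k) (Fin k) ℝ} (hS : S.PosSemidef) :
    (cmap S).PosSemidef := by
  open scoped MatrixOrder in
  obtain ⟨C, rfl⟩ := CStarAlgebra.nonneg_iff_eq_star_mul_self.mp hS.nonneg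
  rw [star_eq_conjTranspose]
  rw [cmap_mul, show cmap Cᴴ = (cmap C)ᴴ by
    rw [cmap_conjTranspose, real_conjTranspose_eq_transpose]]
  exact posSemidef_conjTranspose_mul_self _

lemma smul_one_sub_posSemidef {k : ℕ} {M : Matrix (Fin k) (Fin k) ℝ} (hM : M.IsHermitian)
    {γ : ℝ} (hub : ∀ c : ℝ, (∃ v : Fin k → ℝ, v ≠ 0 ∧ M *ᵥ v = c • v) → c ≤ γ) :
    (γ • (1 : Matrix (Fin k) (Fin k) ℝ) - M).PosSemidef := by
  have hN : (γ • (1 : Matrix (Fin k) (Fin k) ℝ) - M).IsHermitian := by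
    unfold Matrix.IsHermitian at *
    rw [conjTranspose_sub, conjTranspose_smul, conjTranspose_one, hM]
    simp
  apply hN.posSemidef_iff_eigenvalues_nonneg.mpr
  intro i
  have hv := hN.mulVec_eigenvectorBasis i
  set u : Fin k → ℝ := ⇑(hN.eigenvectorBasis i) with hu
  have hune : u ≠ 0 := by
    have := hN.eigenvectorBasis.orthonormal.ne_zero i
    intro h
    apply this
    ext j
    exact congrFun h j
  have hMu : M *ᵥ u = (γ - hN.eigenvalues i) • u := by
    have h1 : (γ • (1 : Matrix (Fin k) (Fin k) ℝ) - M) *ᵥ u = γ • u - M *ᵥ u := by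
      rw [sub_mulVec, smul_mulVec, one_mulVec]
    rw [h1] at hv
    have : M *ᵥ u = γ • u - hN.eigenvalues i • u := by
      rw [← hv]; abel
    rw [this, ← sub_smul]
  have := hub _ ⟨u, hune, hMu⟩
  simp only [Pi.zero_apply]
  linarith

/-- Robustness of the discrete low-gain design: if `P_δ` solves the discrete `H₂`
Riccati equation `P = AᵀPA + δI - AᵀPB(BᵀPB + I)⁻¹BᵀPA`, `F_δ = -(BᵀP_δB + I)⁻¹BᵀP_δA`
and `γ_δ = λ_max(BᵀP_δB)`, then for any `λ ∈ ℂ` with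
`|λ - (1 + 1/γ_δ)| < √(1+γ_δ)/γ_δ`, the matrix `A + λ B F_δ` is Schur stable. -/
theorem discrete_low_gain_robustness (n m : ℕ) (A : Matrix (Fin n) (Fin n) ℝ)
    (B : Matrix (Fin n) (Fin m) ℝ)
    (hstab : ∃ K : Matrix (Fin m) (Fin n) ℝ, ∀ μ : ℂ,
      (∃ v : Fin n → ℂ, v ≠ 0 ∧
        ((A + B * K).map (fun x : ℝ => (x : ℂ))).mulVec v = μ • v) →
      ‖μ‖ < 1)
    (hA : ∀ μ : ℂ, (∃ v : Fin n → ℂ, v ≠ 0 ∧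
      (A.map (fun x : ℝ => (x : ℂ))).mulVec v = μ • v) → ‖μ‖ ≤ 1)
    (δ : ℝ) (hδ : 0 < δ)
    (P : Matrix (Fin n) (Fin n) ℝ) (hP : P.PosDef) (hPsymm : P.IsSymm)
    (hric : P = Aᵀ * P * A + δ • (1 : Matrix (Fin n) (Fin n) ℝ) -
      Aᵀ * P * B * (Bᵀ * P * B + (1 : Matrix (Fin m) (Fin m) ℝ))⁻¹ * Bᵀ * P * A)
    (F : Matrix (Fin m) (Fin n) ℝ)
    (hF : F = -((Bᵀ * P * B + (1 : Matrix (Fin m) (Fin m) ℝ))⁻¹ * (Bᵀ * P * A)))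
    (γ : ℝ)
    (hγ : IsGreatest {c : ℝ | ∃ v : Fin m → ℝ, v ≠ 0 ∧
      (Bᵀ * P * B).mulVec v = c • v} γ)
    (lam : ℂ)
    (hlam : ‖lam - (1 + 1 / (γ : ℂ))‖ < Real.sqrt (1 + γ) / γ) :
    ∀ μ : ℂ, (∃ v : Fin n → ℂ, v ≠ 0 ∧
      (A.map (fun x : ℝ => (x : ℂ)) +
        lam • ((B * F).map (fun x : ℝ => (x : ℂ)))).mulVec v = μ • v) →
      ‖μ‖ < 1 := by
  intro μ hex
  obtain ⟨v, hv0, heig⟩ := hex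
  -- B^T P B is positive semidefinite
  have hBPB : (Bᵀ * P * B).PosSemidef := by
    have := hP.posSemidef.conjTranspose_mul_mul_same B
    rwa [real_conjTranspose_eq_transpose] at this
  -- γ is nonnegative
  have hγ0 : 0 ≤ γ := by
    obtain ⟨v0, hv0ne, hv0eq⟩ := hγ.1
    have h1 : 0 ≤ star v0 ⬝ᵥ ((Bᵀ * P * B) *ᵥ v0) := hBPB.dotProduct_mulVec_nonneg v0
    rw [hv0eq] at h1
    have hsv : star v0 = v0 := by ext i; simp
    rw [hsv, dotProduct_smul] at h1
    have hnn : (0:ℝ) ≤ v0 ⬝ᵥ v0 := Finset.sum_nonneg fun i _ => mul_self_nonneg _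
    have h3 : 0 < v0 ⬝ᵥ v0 :=
      hnn.lt_of_ne fun h => hv0ne (dotProduct_self_eq_zero.mp h.symm)
    by_contra hneg
    push_neg at hneg
    have : γ • (v0 ⬝ᵥ v0) < 0 := smul_neg_of_neg_of_pos hneg h3
    linarith [h1, this]
  -- γ must be positive, else the hypothesis on lam is vacuous
  rcases hγ0.lt_or_eq with hγpos | hγzero
  swap
  · exfalso
    rw [← hγzero] at hlam
    rw [add_zero, Real.sqrt_one, div_zero] at hlam
    exact absurd hlam (norm_nonneg _).not_gt
  have hγne : γ ≠ 0 := ne_of_gt hγpos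
  -- squared form of the disc condition
  have hkey : (1 + γ) * Complex.normSq (1 - lam) ≤ Complex.normSq lam := by
    have h2 : ‖lam - (1 + 1/(γ:ℂ))‖ ^ 2 < (Real.sqrt (1+γ)/γ)^2 :=
      pow_lt_pow_left₀ hlam (norm_nonneg _) two_ne_zero
    rw [Complex.sq_norm, div_pow, Real.sq_sqrt (by linarith : (0:ℝ) ≤ 1 + γ)] at h2
    have hc : (1 + 1/(γ:ℂ)) = ((1 + 1/γ : ℝ) : ℂ) := by push_cast; ring
    rw [hc] at h2
    rw [Complex.normSq_apply, Complex.normSq_apply] at *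
    simp only [Complex.sub_re, Complex.sub_im, Complex.one_re, Complex.one_im,
      Complex.ofReal_re, Complex.ofReal_im] at h2 ⊢
    have h3 : γ^2 * ((lam.re - (1 + 1/γ)) * (lam.re - (1 + 1/γ)) +
        (lam.im - 0) * (lam.im - 0)) < 1 + γ := by
      rw [← lt_div_iff₀' (by positivity)]
      exact h2
    have h5 : (γ*lam.re - (γ+1))^2 + (γ*lam.im)^2 < 1 + γ := by
      have he : (γ*lam.re - (γ+1))^2 + (γ*lam.im)^2 =
          γ^2 * ((lam.re - (1 + 1/γ)) * (lam.re - (1 + 1/γ)) +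
            (lam.im - 0) * (lam.im - 0)) := by
        field_simp
        ring
      rw [he]
      exact h3
    nlinarith [h5, hγpos]
  -- real matrix identities
  set R : Matrix (Fin m) (Fin m) ℝ := Bᵀ * P * B + 1 with hRdef
  have hRpos : R.PosDef := Matrix.PosDef.posSemidef_add hBPB Matrix.PosDef.one
  have hRdet : IsUnit R.det := hRpos.det_pos.ne'.isUnit
  have hBPA : Bᵀ * P * A = -(R * F) := by
    rw [hF, Matrix.mul_neg, neg_neg, ← Matrix.mul_assoc, Matrix.mul_nonsing_inv _ hRdet,
      Matrix.one_mul]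
  have hRsymm : Rᵀ = R := by
    rw [hRdef, transpose_add, transpose_one, transpose_mul, transpose_mul,
      transpose_transpose, hPsymm, ← Matrix.mul_assoc]
  have hAPB : Aᵀ * P * B = -(Fᵀ * R) := by
    have h := congrArg Matrix.transpose hBPA
    rw [transpose_mul, transpose_mul, transpose_transpose, transpose_neg, transpose_mul,
      hPsymm, hRsymm, ← Matrix.mul_assoc] at h
    exact h
  have e0 : Aᵀ * P * B * R⁻¹ * Bᵀ * P * A = Fᵀ * R * F := by
    have h1 : Aᵀ * P * B * R⁻¹ * Bᵀ * P * A = (Aᵀ * P * B) * R⁻¹ * (Bᵀ * P * A) := by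
      simp only [Matrix.mul_assoc]
    rw [h1, hAPB, hBPA, Matrix.neg_mul, Matrix.neg_mul, Matrix.mul_neg, neg_neg,
      Matrix.mul_assoc Fᵀ R R⁻¹, Matrix.mul_nonsing_inv _ hRdet, Matrix.mul_one,
      ← Matrix.mul_assoc]
  have e1 : Aᵀ * P * A = P - δ • (1 : Matrix (Fin n) (Fin n) ℝ) + Fᵀ * R * F := by
    rw [e0] at hric
    conv_rhs => rw [hric]
    abel
  have e2 : Aᵀ * P * (B * F) = -(Fᵀ * R * F) := by
    have h1 : Aᵀ * P * (B * F) = (Aᵀ * P * B) * F := by simp only [Matrix.mul_assoc]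
    rw [h1, hAPB, Matrix.neg_mul]
  have e3 : (B * F)ᵀ * P * A = -(Fᵀ * R * F) := by
    rw [transpose_mul]
    have h1 : Fᵀ * Bᵀ * P * A = Fᵀ * (Bᵀ * P * A) := by simp only [Matrix.mul_assoc]
    rw [h1, hBPA, Matrix.mul_neg, ← Matrix.mul_assoc]
  have e4 : (B * F)ᵀ * P * (B * F) = Fᵀ * R * F - Fᵀ * F := by
    have h1 : (B * F)ᵀ * P * (B * F) = Fᵀ * (Bᵀ * P * B) * F := by
      rw [transpose_mul]; simp only [Matrix.mul_assoc]
    have h2 : Bᵀ * P * B = R - 1 := by rw [hRdef]; abel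
    rw [h1, h2, Matrix.mul_sub, Matrix.mul_one, Matrix.sub_mul]
  -- complex matrices
  have heig' : ((cmap A + lam • cmap (B * F)) *ᵥ v) = μ • v := heig
  set Ac : Matrix (Fin n) (Fin n) ℂ := cmap A with hAc
  set Kc : Matrix (Fin n) (Fin n) ℂ := cmap (B * F) with hKc
  set Pc : Matrix (Fin n) (Fin n) ℂ := cmap P with hPc
  set Sc : Matrix (Fin n) (Fin n) ℂ := cmap (Fᵀ * R * F) with hSc
  set Tc : Matrix (Fin n) (Fin n) ℂ := cmap (Fᵀ * F) with hTc
  set Acl : Matrix (Fin n) (Fin n) ℂ := Ac + lam • Kc with hAcl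
  have hAclH : Aclᴴ = cmap Aᵀ + (starRingEnd ℂ) lam • cmap (B * F)ᵀ := by
    rw [hAcl, conjTranspose_add, conjTranspose_smul, hAc, hKc, cmap_conjTranspose,
      cmap_conjTranspose]
    rfl
  have hexp : Aclᴴ * Pc * Acl =
      cmap (Aᵀ * P * A) + lam • cmap (Aᵀ * P * (B * F)) +
        (starRingEnd ℂ) lam • cmap ((B * F)ᵀ * P * A) +
        ((starRingEnd ℂ) lam * lam) • cmap ((B * F)ᵀ * P * (B * F)) := by
    rw [hAclH, hAcl, hPc]
    simp only [cmap_mul, Matrix.add_mul, Matrix.mul_add, smul_mul_assoc,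
      mul_smul_comm, smul_smul, Matrix.mul_assoc, hAc, hKc, smul_add]
    rw [mul_comm ((starRingEnd ℂ) lam) lam]
    abel
  have hKeyM : Pc - Aclᴴ * Pc * Acl =
      ((δ : ℝ) : ℂ) • (1 : Matrix (Fin n) (Fin n) ℂ) -
        ((Complex.normSq (1 - lam) : ℝ) : ℂ) • Sc +
        ((Complex.normSq lam : ℝ) : ℂ) • Tc := by
    have ce1 : cmap (Aᵀ * P * A) = Pc - ((δ : ℝ) : ℂ) • 1 + Sc := by
      rw [e1, cmap_add, cmap_sub, cmap_smul, cmap_one, hPc, hSc]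
    have ce2 : cmap (Aᵀ * P * (B * F)) = -Sc := by rw [e2, cmap_neg, hSc]
    have ce3 : cmap ((B * F)ᵀ * P * A) = -Sc := by rw [e3, cmap_neg, hSc]
    have ce4 : cmap ((B * F)ᵀ * P * (B * F)) = Sc - Tc := by rw [e4, cmap_sub, hSc, hTc]
    rw [hexp, ce1, ce2, ce3, ce4]
    have hc1 : ((Complex.normSq (1 - lam) : ℝ) : ℂ) =
        1 - lam - (starRingEnd ℂ) lam + (starRingEnd ℂ) lam * lam := by
      rw [← Complex.mul_conj (1 - lam), map_sub, _root_.map_one]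
      ring
    have hc2 : ((Complex.normSq lam : ℝ) : ℂ) = (starRingEnd ℂ) lam * lam := by
      rw [mul_comm, Complex.mul_conj]
    rw [hc1, hc2]
    module
  -- quadratic forms
  set w : Fin m → ℂ := cmap F *ᵥ v with hw
  set p : ℂ := star v ⬝ᵥ (Pc *ᵥ v) with hp
  set nv : ℂ := star v ⬝ᵥ v with hnv
  set nw : ℂ := star w ⬝ᵥ w with hnw
  set qw : ℂ := star w ⬝ᵥ (cmap (Bᵀ * P * B) *ᵥ w) with hqw
  have h2nd : star v ⬝ᵥ ((Aclᴴ * Pc * Acl) *ᵥ v) = ((Complex.normSq μ : ℝ) : ℂ) * p := by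
    have ha : Aclᴴ * Pc * Acl = Aclᴴ * (Pc * Acl) := Matrix.mul_assoc _ _ _
    rw [ha, ← Matrix.mulVec_mulVec, Matrix.dotProduct_mulVec, ← Matrix.star_mulVec, heig',
      ← Matrix.mulVec_mulVec, heig', Matrix.mulVec_smul, star_smul, smul_dotProduct,
      dotProduct_smul, smul_eq_mul, smul_eq_mul, ← hp, Complex.star_def, ← mul_assoc,
      mul_comm ((starRingEnd ℂ) μ) μ, Complex.mul_conj]
  have hsv : star v ⬝ᵥ (Sc *ᵥ v) = qw + nw := by
    have hS : Sc = (cmap F)ᴴ * ((cmap (Bᵀ * P * B) + 1) * cmap F) := by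
      rw [hSc, show Fᵀ * R * F = Fᵀ * (R * F) from Matrix.mul_assoc _ _ _, cmap_mul, cmap_mul,
        ← cmap_conjTranspose, hRdef, cmap_add, cmap_one]
    rw [hS, ← Matrix.mulVec_mulVec, Matrix.dotProduct_mulVec, ← Matrix.star_mulVec,
      ← Matrix.mulVec_mulVec, ← hw, Matrix.add_mulVec, Matrix.one_mulVec, dotProduct_add,
      ← hqw, ← hnw]
  have htv : star v ⬝ᵥ (Tc *ᵥ v) = nw := by
    have hT : Tc = (cmap F)ᴴ * cmap F := by
      rw [hTc, cmap_mul, ← cmap_conjTranspose]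
    rw [hT, ← Matrix.mulVec_mulVec, Matrix.dotProduct_mulVec, ← Matrix.star_mulVec, ← hw, ← hnw]
  have hqv := congrArg (fun M : Matrix (Fin n) (Fin n) ℂ => star v ⬝ᵥ (M *ᵥ v)) hKeyM
  simp only [Matrix.sub_mulVec, Matrix.add_mulVec, Matrix.smul_mulVec,
    Matrix.one_mulVec, dotProduct_sub, dotProduct_add, dotProduct_smul, smul_eq_mul] at hqv
  rw [h2nd, hsv, htv, ← hp, ← hnv] at hqv
  have hre := congrArg Complex.re hqv
  simp only [Complex.sub_re, Complex.add_re, Complex.re_ofReal_mul] at hre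
  -- real part facts
  have hnvre : 0 < nv.re := by
    have h := Matrix.PosDef.re_dotProduct_pos (Matrix.PosDef.one (n := Fin n) (R := ℂ)) hv0
    rw [Matrix.one_mulVec] at h
    simp only [RCLike.re_to_complex] at h
    rw [← hnv] at h
    exact h
  have hpre : 0 ≤ p.re := by
    have h := (cmap_posSemidef hP.posSemidef).re_dotProduct_nonneg v
    simp only [RCLike.re_to_complex] at h
    rw [← hPc, ← hp] at h
    exact h
  have hnwre : 0 ≤ nw.re := by
    have h := (Matrix.PosSemidef.one (n := Fin m) (R := ℂ)).re_dotProduct_nonneg w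
    rw [Matrix.one_mulVec] at h
    simp only [RCLike.re_to_complex] at h
    rw [← hnw] at h
    exact h
  have hqwre : qw.re ≤ γ * nw.re := by
    have hpsd := cmap_posSemidef (smul_one_sub_posSemidef hBPB.isHermitian
      (fun c hc => hγ.2 hc))
    have h := hpsd.re_dotProduct_nonneg w
    rw [cmap_sub, cmap_smul, cmap_one, Matrix.sub_mulVec, Matrix.smul_mulVec,
      Matrix.one_mulVec, dotProduct_sub, dotProduct_smul, smul_eq_mul, ← hqw, ← hnw] at h
    simp only [RCLike.re_to_complex, Complex.sub_re, Complex.re_ofReal_mul] at h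
    linarith
  clear_value R Ac Kc Pc Sc Tc Acl w p nv nw qw
  clear hqv hKeyM hexp heig heig' hAclH hsv htv h2nd hγ hric hF hstab hA hBPA hAPB
  clear e0 e1 e2 e3 e4 hBPB hRpos hRdet hRsymm hP hPsymm hlam hRdef
  clear hAc hKc hPc hSc hTc hAcl hw hp hnv hnw hqw hv0
  clear R Ac Kc Pc Sc Tc Acl w v A B P F
  have hfin : 0 < (1 - Complex.normSq μ) * p.re := by
    nlinarith [mul_pos hδ hnvre, hqwre, hnwre, hkey, Complex.normSq_nonneg (1 - lam), hre]
  have hμ1 : Complex.normSq μ < 1 := by nlinarith [hfin, hpre]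
  nlinarith [Complex.sq_norm μ, norm_nonneg μ, hμ1]
end
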